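/- Let G be a finite connected simple graph and L a list assignment with |L(v)| ≥ deg(v) for every vertex v. If some vertex u satisfies |L(u)| ≥ deg(u) + 1, then G has a proper L-coloring. -/

import Mathlib

open SimpleGraph

-- helper: walk avoiding complement of s lifts to reachability in induced graph
lemma reach_induce {V : Type*} {G : SimpleGraph V} {s : Set V} :
    ∀ {a b : V} (p : G.Walk a b) (_ : ∀ x ∈ p.support, x ∈ s)
      (ha : a ∈ s) (hb : b ∈ s),
      (G.induce s).Reachable ⟨a, ha⟩ ⟨b, hb⟩ := by
  intro a b p
  induction p with
  | nil => intro _ ha hb; rfl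
  | cons h q ih =>
    rename_i c d e
    intro hs ha hb
    have hx : d ∈ s := hs d (by simp)
    exact (SimpleGraph.Adj.reachable (by exact h : (G.induce s).Adj ⟨c, ha⟩ ⟨d, hx⟩)).trans
      (ih (fun x hx => hs x (by simp [hx])) hx hb)

-- degree in induced graph on {x | x ≠ v}
lemma degree_induce_ne {V : Type*} [Fintype V] [DecidableEq V] (G : SimpleGraph V)
    [DecidableRel G.Adj] (v w : V) (hw : w ∈ {x | x ≠ v})
    [Fintype ((G.induce {x | x ≠ v}).neighborSet ⟨w, hw⟩)] :
    (G.induce {x | x ≠ v}).degree ⟨w, hw⟩ = ((G.neighborFinset w).erase v).card := by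
  rw [SimpleGraph.degree]
  refine Finset.card_bij (fun a _ => (a : V)) ?_ ?_ ?_
  · rintro ⟨a, ha⟩ h
    simp only [SimpleGraph.mem_neighborFinset] at h ⊢
    simp only [SimpleGraph.comap_adj, Function.Embedding.coe_subtype] at h
    exact Finset.mem_erase.mpr ⟨ha, (SimpleGraph.mem_neighborFinset _ _ _).mpr h⟩
  · rintro ⟨a, _⟩ _ ⟨b, _⟩ _ hab
    simpa using hab
  · intro b hb
    simp only [Finset.mem_erase, SimpleGraph.mem_neighborFinset] at hb
    exact ⟨⟨b, hb.1⟩, by simpa [SimpleGraph.mem_neighborFinset, SimpleGraph.comap_adj] using hb.2, rfl⟩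

lemma aux : ∀ (n : ℕ) {V : Type*} [Fintype V] (G : SimpleGraph V) [DecidableRel G.Adj],
    Fintype.card V = n → G.Connected → ∀ (L : V → Finset ℕ),
    (∀ v, G.degree v ≤ (L v).card) → ∀ u, G.degree u + 1 ≤ (L u).card →
    ∃ φ : V → ℕ, (∀ v, φ v ∈ L v) ∧ ∀ a b, G.Adj a b → φ a ≠ φ b := by
  intro n
  induction n using Nat.strong_induction_on with
  | _ n ih =>
    intro V _ G _ hcard hconn L hL u hu
    classical
    by_cases hsing : ∀ x : V, x = u
    · -- single vertex
      have hne : (L u).Nonempty := Finset.card_pos.mp (by omega)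
      obtain ⟨c, hc⟩ := hne
      refine ⟨fun _ => c, fun v => by rw [hsing v]; exact hc, fun a b hab => ?_⟩
      rw [hsing a, hsing b] at hab
      exact absurd hab (G.irrefl)
    · push_neg at hsing
      obtain ⟨x0, hx0⟩ := hsing
      -- pick v maximizing distance from u
      obtain ⟨v, -, hv⟩ := Finset.exists_max_image (Finset.univ : Finset V)
        (fun x => G.dist u x) ⟨u, Finset.mem_univ u⟩
      have hv' : ∀ x, G.dist u x ≤ G.dist u v := fun x => hv x (Finset.mem_univ x)
      have hdx0 : 0 < G.dist u x0 := hconn.pos_dist_of_ne (Ne.symm hx0)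
      have hvu : v ≠ u := by
        intro h
        have := hv' x0
        rw [h, SimpleGraph.dist_self] at this
        omega
      -- v has a neighbor, so L v is nonempty
      have hdegv : 0 < G.degree v := by
        obtain ⟨p⟩ := hconn v u
        cases p with
        | nil => exact absurd rfl hvu
        | cons h q => exact (G.degree_pos_iff_exists_adj v).mpr ⟨_, h⟩
      obtain ⟨c, hc⟩ : (L v).Nonempty := Finset.card_pos.mp (lt_of_lt_of_le hdegv (hL v))
      set s : Set V := {x | x ≠ v} with hs
      have hus : u ∈ s := fun h => hvu h.symm
      haveI : DecidablePred (· ∈ s) := fun x => Classical.propDecidable _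
      haveI : DecidableRel (G.induce s).Adj := fun a b =>
        decidable_of_iff (G.Adj a.1 b.1) (by simp)
      -- avoid v on shortest walks
      have key : ∀ w : V, w ∈ s → ∃ p : G.Walk u w, ∀ x ∈ p.support, x ∈ s := by
        intro w hw
        obtain ⟨p, hp⟩ := (hconn u w).exists_walk_length_eq_dist
        refine ⟨p, fun x hx => ?_⟩
        intro hxv
        subst hxv
        have h1 : G.dist u x ≤ (p.takeUntil x hx).length := SimpleGraph.dist_le _
        have h2 : (p.takeUntil x hx).length + (p.dropUntil x hx).length = p.length := by
          rw [← SimpleGraph.Walk.length_append, p.take_spec hx]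
        have h3 : G.dist u w ≤ G.dist u x := hv' w
        have h4 : (p.dropUntil x hx).length = 0 := by omega
        exact hw (SimpleGraph.Walk.eq_of_length_eq_zero (p := p.dropUntil x hx) h4).symm
      -- connectivity of induced graph
      have hconn' : (G.induce s).Connected := by
        rw [SimpleGraph.connected_iff]
        refine ⟨fun a b => ?_, ⟨⟨u, hus⟩⟩⟩
        obtain ⟨p, hp⟩ := key a.1 a.2
        obtain ⟨q, hq⟩ := key b.1 b.2
        exact (reach_induce p hp hus a.2).symm.trans (reach_induce q hq hus b.2)
      -- the new list assignment
      set L' : ↥s → Finset ℕ := fun w => if G.Adj v w.1 then (L w.1).erase c else L w.1 with hL'def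
      have hdeg' : ∀ (w : ↥s), (G.induce s).degree w = ((G.neighborFinset w.1).erase v).card := by
        rintro ⟨w, hw⟩
        exact degree_induce_ne G v w hw
      have hcases : ∀ (w : ↥s), (G.induce s).degree w ≤ (L' w).card ∧
          ((L w.1).card ≥ G.degree w.1 + 1 → (G.induce s).degree w + 1 ≤ (L' w).card) := by
        rintro ⟨w, hw⟩
        rw [hdeg' ⟨w, hw⟩]
        rw [show ((⟨w, hw⟩ : ↥s) : V) = w from rfl]
        by_cases hadj : G.Adj v w
        · have hvmem : v ∈ G.neighborFinset w := (G.mem_neighborFinset w v).mpr hadj.symm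
          have e1 : ((G.neighborFinset w).erase v).card = G.degree w - 1 := by
            rw [Finset.card_erase_of_mem hvmem]; rfl
          have e2 : (L w).card - 1 ≤ ((L w).erase c).card := Finset.pred_card_le_card_erase
          have e3 : L' ⟨w, hw⟩ = (L w).erase c := by simp [hL'def, hadj]
          have e4 := hL w
          have hdw : 0 < G.degree w := Finset.card_pos.mpr ⟨v, hvmem⟩
          rw [e3]
          constructor
          · omega
          · intro h; omega
        · have hvmem : v ∉ G.neighborFinset w := fun h =>
            hadj ((G.mem_neighborFinset w v).mp h).symm
          have e1 : (G.neighborFinset w).erase v = G.neighborFinset w :=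
            Finset.erase_eq_of_notMem hvmem
          have e3 : L' ⟨w, hw⟩ = L w := by simp [hL'def, hadj]
          rw [e1, e3]
          exact ⟨hL w, fun h => h⟩
      have hcard' : Fintype.card ↥s < n := by
        have h1 : Fintype.card ↥s = Fintype.card {x : V // ¬ x = v} :=
          Fintype.card_congr (Equiv.subtypeEquivRight (fun x => Iff.rfl))
        have h2 : Fintype.card {x : V // ¬ x = v} = Fintype.card V - Fintype.card {x : V // x = v} :=
          Fintype.card_subtype_compl _
        rw [Fintype.card_subtype_eq] at h2
        haveI : Nonempty V := hconn.nonempty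
        have hpos : 0 < Fintype.card V := Fintype.card_pos
        omega
      obtain ⟨φ', hφ'mem, hφ'prop⟩ := ih (Fintype.card ↥s) (by omega) (G.induce s) rfl hconn'
        L' (fun w => (hcases w).1) ⟨u, hus⟩ ((hcases ⟨u, hus⟩).2 hu)
      refine ⟨fun w => if h : w = v then c else φ' ⟨w, h⟩, ?_, ?_⟩
      · intro w
        by_cases h : w = v
        · simp only [h, dif_pos]; exact hc
        · simp only [dif_neg h]
          have := hφ'mem ⟨w, h⟩
          by_cases hadj : G.Adj v w
          · rw [show L' ⟨w, h⟩ = (L w).erase c by simp [hL'def, hadj]] at this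
            exact Finset.mem_of_mem_erase this
          · rwa [show L' ⟨w, h⟩ = L w by simp [hL'def, hadj]] at this
      · intro a b hab
        by_cases ha : a = v <;> by_cases hb : b = v
        · subst ha; subst hb; exact absurd hab (G.irrefl)
        · subst ha
          simp only [dif_pos, dif_neg hb]
          have := hφ'mem ⟨b, hb⟩
          rw [show L' ⟨b, hb⟩ = (L b).erase c by simp [hL'def, hab]] at this
          exact fun h => (Finset.ne_of_mem_erase this) h.symm
        · subst hb
          simp only [dif_pos, dif_neg ha]
          have := hφ'mem ⟨a, ha⟩
          rw [show L' ⟨a, ha⟩ = (L a).erase c by simp [hL'def, hab.symm]] at this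
          exact Finset.ne_of_mem_erase this
        · simp only [dif_neg ha, dif_neg hb]
          exact hφ'prop ⟨a, ha⟩ ⟨b, hb⟩ (by simpa using hab)

/-- Erdős–Rubin–Taylor (easy direction): a connected graph with lists of size
at least the degrees, one of which is strictly larger, is `L`-colorable. -/
theorem stmt_4 {V : Type*} [Fintype V] (G : SimpleGraph V) [DecidableRel G.Adj]
    (hconn : G.Connected) (L : V → Finset ℕ)
    (hL : ∀ v, G.degree v ≤ (L v).card)
    (u : V) (hu : G.degree u + 1 ≤ (L u).card) :
    ∃ φ : V → ℕ, (∀ v, φ v ∈ L v) ∧ ∀ a b, G.Adj a b → φ a ≠ φ b :=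
  aux (Fintype.card V) G rfl hconn L hL u hu
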